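/- Let n be a positive integer and let s_0 > s_1 > … > s_{n−1} > 0 be reals. Equip ω^n (the set of sequences of natural numbers of length n) with the ultrametric d(x,y) = s_{Δ(x,y)} for x ≠ y, where Δ(x,y) is the length of the longest common initial segment of x and y. Then for all A, B ⊆ ω^n, the metric spaces A and B are isometric if and only if the trees A↓ and B↓ are isomorphic, where A↓ = {a↾k : a ∈ A, k ≤ n} is ordered by the initial-segment relation. -/

import Mathlib

/-- `Q` is isomorphic to `P` as a tree (subsets of `ω^{≤n}`, ordered by the
initial-segment relation). -/
def TreeIso (P Q : Set (List ℕ)) : Prop :=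
  ∃ e : P → List ℕ, Function.Injective e ∧ Set.range e = Q ∧
    ∀ a b : P, ((a : List ℕ) <+: (b : List ℕ) ↔ e a <+: e b)

/-- `A↓`: the set of all initial segments of elements of `A ⊆ ω^n`. -/
def down (n : ℕ) (A : Set (List ℕ)) : Set (List ℕ) :=
  {t | ∃ a ∈ A, ∃ k ≤ n, t = a.take k}

/-- `Δ(x,y)`: the length of the longest common initial segment of `x, y`. -/
def lcp (x y : List ℕ) : ℕ := ((x.zip y).takeWhile (fun p => p.1 == p.2)).length

/-- The ultrametric on `ω^n` given by `d(x,y) = s (Δ(x,y))` for `x ≠ y`. -/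
noncomputable def treeDist (s : ℕ → ℝ) (x y : List ℕ) : ℝ :=
  if x = y then 0 else s (lcp x y)

section AuxLemmas

lemma lcp_cons (a b : ℕ) (x y : List ℕ) :
    lcp (a :: x) (b :: y) = if a = b then lcp x y + 1 else 0 := by
  simp only [lcp, List.zip_cons_cons, List.takeWhile_cons]
  by_cases h : a = b <;> simp [h]

lemma lcp_le_left (x y : List ℕ) : lcp x y ≤ x.length :=
  ((List.takeWhile_sublist _).length_le).trans (by simp [List.length_zip])

lemma lcp_self (x : List ℕ) : lcp x x = x.length := by
  induction x with
  | nil => simp [lcp]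
  | cons a x ih => simp [lcp_cons, ih]

lemma take_eq_iff (x y : List ℕ) (h : x.length = y.length) (k : ℕ) :
    x.take k = y.take k ↔ x = y ∨ k ≤ lcp x y := by
  induction x generalizing y k with
  | nil =>
    cases y with
    | nil => simp
    | cons b y => simp at h
  | cons a x ih =>
    cases y with
    | nil => simp at h
    | cons b y =>
      simp only [List.length_cons, Nat.add_right_cancel_iff] at h
      cases k with
      | zero => simp
      | succ k =>
        simp only [List.take_succ_cons, List.cons.injEq, lcp_cons]
        by_cases hab : a = b
        · subst hab
          simp [ih y h k, Nat.succ_le_succ_iff]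
        · simp [hab]

lemma take_eq_iff' (x y : List ℕ) (h : x.length = y.length) (k : ℕ) (hk : k ≤ x.length) :
    x.take k = y.take k ↔ k ≤ lcp x y := by
  rw [take_eq_iff x y h k]
  constructor
  · rintro (rfl | h2)
    · rw [lcp_self]; exact hk
    · exact h2
  · exact Or.inr

lemma lcp_lt_of_ne (x y : List ℕ) (h : x.length = y.length) (hne : x ≠ y) :
    lcp x y < x.length := by
  rcases lt_or_eq_of_le (lcp_le_left x y) with h1 | h1
  · exact h1
  · exfalso
    apply hne
    have := (take_eq_iff' x y h x.length le_rfl).mpr (le_of_eq h1.symm)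
    simpa [List.take_of_length_le, h.le, h] using this

lemma prefix_char (n : ℕ) (x y : List ℕ) (hx : x.length = n) (hy : y.length = n)
    (k j : ℕ) (hk : k ≤ n) (hj : j ≤ n) :
    x.take k <+: y.take j ↔ k ≤ j ∧ k ≤ lcp x y := by
  constructor
  · intro h
    have hlen := h.length_le
    simp only [List.length_take, hx, hy] at hlen
    rw [Nat.min_eq_left hk, Nat.min_eq_left hj] at hlen
    refine ⟨hlen, ?_⟩
    have h2 := List.prefix_iff_eq_take.mp h
    rw [List.length_take, hx, Nat.min_eq_left hk, List.take_take,
      Nat.min_eq_left hlen] at h2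
    exact (take_eq_iff' x y (hx.trans hy.symm) k (hx ▸ hk)).mp h2
  · rintro ⟨h1, h2⟩
    have h3 : x.take k = y.take k := (take_eq_iff' x y (hx.trans hy.symm) k (hx ▸ hk)).mpr h2
    rw [h3, ← Nat.min_eq_left h1, ← List.take_take]
    exact List.take_prefix k (y.take j)

lemma down_closed {n : ℕ} {A : Set (List ℕ)} {t : List ℕ} (ht : t ∈ down n A) (k : ℕ) :
    t.take k ∈ down n A := by
  obtain ⟨a, ha, j, hj, rfl⟩ := ht
  exact ⟨a, ha, min k j, (min_le_right k j).trans hj, by rw [List.take_take]⟩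

lemma mem_down_self {n : ℕ} {A : Set (List ℕ)} {a : List ℕ} (ha : a ∈ A)
    (hlen : a.length = n) : a ∈ down n A :=
  ⟨a, ha, n, le_rfl, by rw [List.take_of_length_le hlen.le]⟩

lemma down_length {n : ℕ} {A : Set (List ℕ)} (hA : ∀ a ∈ A, a.length = n)
    {t : List ℕ} (ht : t ∈ down n A) :
    t.length ≤ n ∧ (t.length = n → t ∈ A) ∧ ∃ a ∈ A, t = a.take t.length := by
  obtain ⟨a, ha, k, hk, rfl⟩ := ht
  have hlen : (a.take k).length = k := by
    rw [List.length_take, hA a ha, Nat.min_eq_left hk]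
  refine ⟨by rw [hlen]; exact hk, ?_, a, ha, by rw [hlen]⟩
  intro h
  rw [hlen] at h
  subst h
  rwa [List.take_of_length_le (hA a ha).le]

lemma length_le_of_mono {P Q : Set (List ℕ)}
    (hP : ∀ t ∈ P, ∀ k : ℕ, List.take k t ∈ P)
    (f : P → Q) (hinj : Function.Injective f)
    (hmono : ∀ u t : P, (u : List ℕ) <+: (t : List ℕ) → (f u : List ℕ) <+: (f t : List ℕ))
    (t : P) : (t : List ℕ).length ≤ (f t : List ℕ).length := by
  set m := (t : List ℕ).length with hm
  set L := (f t : List ℕ).length with hL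
  have key : ∀ i : Fin (m + 1), ((f ⟨(t : List ℕ).take i, hP t t.2 i⟩ : List ℕ)).length < L + 1 := by
    intro i
    have := hmono ⟨(t : List ℕ).take i, hP t t.2 i⟩ t (List.take_prefix _ _)
    exact Nat.lt_succ_of_le this.length_le
  let φ : Fin (m + 1) → Fin (L + 1) := fun i =>
    ⟨((f ⟨(t : List ℕ).take i, hP t t.2 i⟩ : List ℕ)).length, key i⟩
  have hφ : Function.Injective φ := by
    intro i j hij
    have hlen : ((f ⟨(t : List ℕ).take i, hP t t.2 i⟩ : List ℕ)).length
        = ((f ⟨(t : List ℕ).take j, hP t t.2 j⟩ : List ℕ)).length := congrArg Fin.val hij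
    have hpi := hmono ⟨(t : List ℕ).take i, hP t t.2 i⟩ t (List.take_prefix _ _)
    have hpj := hmono ⟨(t : List ℕ).take j, hP t t.2 j⟩ t (List.take_prefix _ _)
    have heq : (f ⟨(t : List ℕ).take i, hP t t.2 i⟩ : List ℕ)
        = (f ⟨(t : List ℕ).take j, hP t t.2 j⟩ : List ℕ) :=
      (List.prefix_of_prefix_length_le hpi hpj hlen.le).eq_of_length hlen
    have := hinj (Subtype.ext heq)
    have h2 : (t : List ℕ).take i = (t : List ℕ).take j := congrArg Subtype.val this
    have : min (i : ℕ) m = min (j : ℕ) m := by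
      have := congrArg List.length h2
      simpa [List.length_take] using this
    rw [Nat.min_eq_left (Nat.lt_succ_iff.mp i.isLt), Nat.min_eq_left (Nat.lt_succ_iff.mp j.isLt)] at this
    exact Fin.ext this
  have := Fintype.card_le_of_injective φ hφ
  simpa using this

lemma take_lcp_eq (x y : List ℕ) : x.take (lcp x y) = y.take (lcp x y) := by
  induction x generalizing y with
  | nil => simp [lcp]
  | cons a x ih =>
    cases y with
    | nil => simp [lcp]
    | cons b y =>
      rw [lcp_cons]
      by_cases h : a = b
      · subst h
        simp [List.take_succ_cons, ih y]
      · simp [h]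

lemma lcp_le_of_mono {P Q : Set (List ℕ)}
    (hQ : ∀ t ∈ Q, ∀ k : ℕ, List.take k t ∈ Q)
    (g : Q → P)
    (gmono : ∀ u t : Q, (u : List ℕ) <+: (t : List ℕ) → (g u : List ℕ) <+: (g t : List ℕ))
    (glen : ∀ v : Q, (g v : List ℕ).length = (v : List ℕ).length)
    (x y : Q) (hxy : (x : List ℕ).length = (y : List ℕ).length) :
    lcp (x : List ℕ) (y : List ℕ) ≤ lcp (g x : List ℕ) (g y : List ℕ) := by
  set L := lcp (x : List ℕ) (y : List ℕ) with hL
  have hcx : ((x : List ℕ).take L) ∈ Q := hQ x x.2 L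
  set c : Q := ⟨(x : List ℕ).take L, hcx⟩ with hc
  have h1 : (c : List ℕ) <+: (x : List ℕ) := List.take_prefix _ _
  have h2 : (c : List ℕ) <+: (y : List ℕ) := by
    show (x : List ℕ).take L <+: (y : List ℕ)
    rw [hL, take_lcp_eq]
    exact List.take_prefix _ _
  have g1 := gmono c x h1
  have g2 := gmono c y h2
  have hlc : (g c : List ℕ).length = L := by
    rw [glen]
    show ((x : List ℕ).take L).length = L
    rw [List.length_take]
    exact Nat.min_eq_left (lcp_le_left _ _)
  have e1 : (g x : List ℕ).take L = (g c : List ℕ) := by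
    have := List.prefix_iff_eq_take.mp g1
    rw [hlc] at this
    exact this.symm
  have e2 : (g y : List ℕ).take L = (g c : List ℕ) := by
    have := List.prefix_iff_eq_take.mp g2
    rw [hlc] at this
    exact this.symm
  rw [← take_eq_iff' (g x : List ℕ) (g y : List ℕ) (by rw [glen, glen, hxy]) L
    (by rw [glen x]; exact lcp_le_left _ _)]
  rw [e1, e2]

end AuxLemmas

theorem stmt14 (n : ℕ) (hn : 0 < n) (s : ℕ → ℝ)
    (hanti : ∀ i j : ℕ, i < j → j < n → s j < s i)
    (hpos : ∀ i : ℕ, i < n → 0 < s i)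
    (A B : Set (List ℕ)) (hA : ∀ a ∈ A, a.length = n)
    (hB : ∀ b ∈ B, b.length = n) :
    (∃ e : A → List ℕ, Function.Injective e ∧ Set.range e = B ∧
      ∀ a b : A, treeDist s (e a) (e b) = treeDist s (a : List ℕ) (b : List ℕ)) ↔
    TreeIso (down n A) (down n B) := by
  have s_inj : ∀ i j : ℕ, i < n → j < n → s i = s j → i = j := by
    intro i j hi hj hij
    rcases lt_trichotomy i j with h | h | h
    · exact absurd hij (ne_of_gt (hanti i j h hj))
    · exact h
    · exact absurd hij (ne_of_lt (hanti j i h hi))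
  constructor
  · rintro ⟨e, einj, erange, edist⟩
    have hBmem : ∀ a : A, e a ∈ B := fun a => erange ▸ ⟨a, rfl⟩
    have helen : ∀ a : A, (e a).length = n := fun a => hB _ (hBmem a)
    have halen : ∀ a : A, (a : List ℕ).length = n := fun a => hA _ a.2
    -- lcp is preserved
    have hlcp : ∀ a b : A, lcp (e a) (e b) = lcp (a : List ℕ) (b : List ℕ) := by
      intro a b
      by_cases h : (a : List ℕ) = (b : List ℕ)
      · have hab : a = b := Subtype.ext h
        subst hab
        rw [lcp_self, lcp_self, helen, halen]
      · have hab : a ≠ b := fun hh => h (congrArg _ hh)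
        have hne : e a ≠ e b := fun he => hab (einj he)
        have hd := edist a b
        rw [treeDist, treeDist, if_neg hne, if_neg h] at hd
        have h1 : lcp (e a) (e b) < n := helen a ▸ lcp_lt_of_ne (e a) (e b)
          ((helen a).trans (helen b).symm) hne
        have h2 : lcp (a : List ℕ) (b : List ℕ) < n := halen a ▸ lcp_lt_of_ne _ _
          ((halen a).trans (halen b).symm) h
        exact s_inj _ _ h1 h2 hd
    -- key: take of equal prefixes map to equal prefixes
    have key : ∀ (a b : A) (k : ℕ), k ≤ n →
        (a : List ℕ).take k = (b : List ℕ).take k → (e a).take k = (e b).take k := by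
      intro a b k hk h
      rw [take_eq_iff' _ _ ((halen a).trans (halen b).symm) k (by rw [halen a]; exact hk)] at h
      rw [take_eq_iff' _ _ ((helen a).trans (helen b).symm) k (by rw [helen a]; exact hk)]
      rw [hlcp]; exact h
    -- representatives
    have hrep : ∀ t : down n A, ∃ a : A, (t : List ℕ).length ≤ n ∧
        (a : List ℕ).take ((t : List ℕ).length) = (t : List ℕ) := by
      intro t
      obtain ⟨h1, _, a, ha, h3⟩ := down_length hA t.2
      exact ⟨⟨a, ha⟩, h1, h3.symm⟩
    classical
    set F : down n A → List ℕ := fun t =>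
      (e (hrep t).choose).take ((t : List ℕ).length) with hF
    have hFeq : ∀ (t : down n A) (a : A),
        (a : List ℕ).take ((t : List ℕ).length) = (t : List ℕ) →
        F t = (e a).take ((t : List ℕ).length) := by
      intro t a h
      obtain ⟨h1, h2⟩ := (hrep t).choose_spec
      exact key _ _ _ h1 (h2.trans h.symm)
    have hFlen : ∀ t : down n A, (F t).length = (t : List ℕ).length := by
      intro t
      obtain ⟨h1, h2⟩ := (hrep t).choose_spec
      rw [hF]
      simp only [List.length_take, helen]
      exact Nat.min_eq_left h1
    refine ⟨F, ?_, ?_, ?_⟩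
    · -- injective
      intro t t' h
      obtain ⟨h1, h2⟩ := (hrep t).choose_spec
      obtain ⟨h1', h2'⟩ := (hrep t').choose_spec
      have hkk : (t : List ℕ).length = (t' : List ℕ).length := by
        rw [← hFlen t, ← hFlen t', h]
      have hee0 := h
      simp only [hF] at hee0
      have hswap : List.take ((t : List ℕ).length) (e (hrep t').choose)
          = List.take ((t' : List ℕ).length) (e (hrep t').choose) := by rw [hkk]
      have hee := hee0.trans hswap.symm
      set a := (hrep t).choose with ha
      set a' := (hrep t').choose with ha'
      set k := (t : List ℕ).length with hk
      have htake : (a : List ℕ).take k = (a' : List ℕ).take k := by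
        rw [take_eq_iff' _ _ ((halen a).trans (halen a').symm) k (by rw [halen a]; exact h1),
          ← hlcp]
        rw [take_eq_iff' _ _ ((helen a).trans (helen a').symm) k
          (by rw [helen a]; exact h1)] at hee
        exact hee
      apply Subtype.ext
      rw [← h2, ← h2', ← hkk, htake]
    · -- range = down n B
      ext u
      constructor
      · rintro ⟨t, rfl⟩
        obtain ⟨h1, h2⟩ := (hrep t).choose_spec
        exact ⟨e (hrep t).choose, hBmem _, (t : List ℕ).length, h1, rfl⟩
      · rintro ⟨b, hb, k, hk, rfl⟩
        obtain ⟨a, rfl⟩ : ∃ a : A, e a = b := by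
          have : b ∈ Set.range e := erange ▸ hb
          exact this
        have hmem : (a : List ℕ).take k ∈ down n A := ⟨a, a.2, k, hk, rfl⟩
        refine ⟨⟨(a : List ℕ).take k, hmem⟩, ?_⟩
        have hklen : (((a : List ℕ).take k : List ℕ)).length = k := by
          rw [List.length_take, halen a, Nat.min_eq_left hk]
        have := hFeq ⟨(a : List ℕ).take k, hmem⟩ a (by simp only [hklen])
        rw [this]
        rw [hklen]
    · -- prefix iff
      intro t t'
      obtain ⟨h1, h2⟩ := (hrep t).choose_spec
      obtain ⟨h1', h2'⟩ := (hrep t').choose_spec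
      have e1 : (((hrep t).choose : List ℕ).take ((t : List ℕ).length) <+:
          ((hrep t').choose : List ℕ).take ((t' : List ℕ).length)) ↔
          ((t : List ℕ) <+: (t' : List ℕ)) := by
        rw [h2, h2']
      simp only [hF]
      rw [← e1]
      rw [prefix_char n _ _ (halen (hrep t).choose) (halen (hrep t').choose) _ _ h1 h1',
        prefix_char n _ _ (helen (hrep t).choose) (helen (hrep t').choose) _ _ h1 h1', hlcp]
  · -- backward
    rintro ⟨E, Einj, Erange, Epre⟩
    classical
    have hEmem : ∀ t : down n A, E t ∈ down n B := fun t => Erange ▸ ⟨t, rfl⟩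
    set f : down n A → down n B := fun t => ⟨E t, hEmem t⟩ with hfdef
    have hfbij : Function.Bijective f := by
      constructor
      · intro t t' h
        exact Einj (congrArg Subtype.val h)
      · intro v
        have hv : (v : List ℕ) ∈ Set.range E := by rw [Erange]; exact v.2
        obtain ⟨t, ht⟩ := hv
        exact ⟨t, Subtype.ext ht⟩
    set q := Equiv.ofBijective f hfbij with hqdef
    have hq : ∀ t : down n A, (q t : List ℕ) = E t := fun t => rfl
    have hfg : ∀ v, q (q.symm v) = v := q.apply_symm_apply
    have hgf : ∀ t, q.symm (q t) = t := q.symm_apply_apply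
    have hE' : ∀ v : down n B, E (q.symm v) = (v : List ℕ) := fun v =>
      congrArg Subtype.val (hfg v)
    have hdownA : ∀ t ∈ down n A, ∀ k : ℕ, List.take k t ∈ down n A :=
      fun t ht k => down_closed ht k
    have hdownB : ∀ t ∈ down n B, ∀ k : ℕ, List.take k t ∈ down n B :=
      fun t ht k => down_closed ht k
    have hfmono : ∀ u t : down n A, (u : List ℕ) <+: (t : List ℕ) →
        (q u : List ℕ) <+: (q t : List ℕ) := fun u t h => (Epre u t).mp h
    have hgmono : ∀ u t : down n B, (u : List ℕ) <+: (t : List ℕ) →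
        (q.symm u : List ℕ) <+: (q.symm t : List ℕ) := by
      intro u t h
      apply (Epre (q.symm u) (q.symm t)).mpr
      rw [hE' u, hE' t]
      exact h
    have hlen1 : ∀ t : down n A, (t : List ℕ).length ≤ (q t : List ℕ).length :=
      length_le_of_mono hdownA (fun t => q t) (fun _ _ h => q.injective h) hfmono
    have hlen2 : ∀ v : down n B, (v : List ℕ).length ≤ (q.symm v : List ℕ).length :=
      length_le_of_mono hdownB (fun v => q.symm v) (fun _ _ h => q.symm.injective h) hgmono
    have hlen : ∀ t : down n A, (q t : List ℕ).length = (t : List ℕ).length := by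
      intro t
      refine le_antisymm ?_ (hlen1 t)
      have := hlen2 (q t)
      rwa [hgf t] at this
    have hglen : ∀ v : down n B, (q.symm v : List ℕ).length = (v : List ℕ).length := by
      intro v
      have := hlen (q.symm v)
      rw [hfg v] at this
      exact this.symm
    set ι : A → down n A := fun a => ⟨(a : List ℕ), mem_down_self a.2 (hA _ a.2)⟩ with hι
    have hlenι : ∀ a : A, (q (ι a) : List ℕ).length = n := by
      intro a
      rw [hlen]
      exact hA _ a.2
    -- lcp preservation
    have hlcpq : ∀ a b : A, lcp (q (ι a) : List ℕ) (q (ι b) : List ℕ)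
        = lcp (a : List ℕ) (b : List ℕ) := by
      intro a b
      apply le_antisymm
      · have h1 : lcp (q (ι a) : List ℕ) (q (ι b) : List ℕ) ≤
            lcp (q.symm (q (ι a)) : List ℕ) (q.symm (q (ι b)) : List ℕ) :=
          lcp_le_of_mono hdownB (fun v => q.symm v) hgmono hglen
            (q (ι a)) (q (ι b)) (by rw [hlenι a, hlenι b])
        rwa [hgf, hgf] at h1
      · exact lcp_le_of_mono hdownA (fun t => q t) hfmono hlen (ι a) (ι b)
          (by show (a : List ℕ).length = (b : List ℕ).length
              rw [hA _ a.2, hA _ b.2])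
    refine ⟨fun a => (q (ι a) : List ℕ), ?_, ?_, ?_⟩
    · intro a b h
      have hii : ι a = ι b := q.injective (Subtype.ext h)
      exact Subtype.ext (congrArg (fun t : down n A => (t : List ℕ)) hii)
    · ext u
      constructor
      · rintro ⟨a, rfl⟩
        obtain ⟨_, h2, _⟩ := down_length hB (q (ι a)).2
        exact h2 (hlenι a)
      · intro hu
        set v : down n B := ⟨u, mem_down_self hu (hB _ hu)⟩ with hv
        obtain ⟨_, h2', _⟩ := down_length hA (q.symm v).2
        have hlenv : ((q.symm v : down n A) : List ℕ).length = n := by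
          rw [hglen v]
          exact hB _ hu
        have hmemA : ((q.symm v : down n A) : List ℕ) ∈ A := h2' hlenv
        refine ⟨⟨((q.symm v : down n A) : List ℕ), hmemA⟩, ?_⟩
        show (q (ι ⟨((q.symm v : down n A) : List ℕ), hmemA⟩) : List ℕ) = u
        have hι2 : ι ⟨((q.symm v : down n A) : List ℕ), hmemA⟩ = q.symm v :=
          Subtype.ext rfl
        rw [hι2, hfg]
    · intro a b
      by_cases h : (a : List ℕ) = (b : List ℕ)
      · have hab : a = b := Subtype.ext h
        subst hab
        rw [treeDist, treeDist, if_pos rfl, if_pos rfl]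
      · have hab : a ≠ b := fun hh => h (congrArg _ hh)
        have hne : (q (ι a) : List ℕ) ≠ (q (ι b) : List ℕ) := by
          intro he
          exact hab (Subtype.ext (congrArg (fun t : down n A => (t : List ℕ))
            (q.injective (Subtype.ext he))))
        rw [treeDist, treeDist, if_neg hne, if_neg h, hlcpq]
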